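/- For finitely supported idempotent probability measures μ₁, μ₂ on X, H(μ₁, μ₂) = 0 if and only if μ₁ = μ₂ (i.e., μ₁(φ) = μ₂(φ) for all φ ∈ C(X, ℝ)). -/

import Mathlib

open Filter Topology

variable {X : Type*}

/-- An idempotent probability measure on a topological space `X`:
a functional on `C(X, ℝ)` preserving constants, shifting by constants,
and turning pointwise max into max. -/
def IsIPM [TopologicalSpace X] (μ : C(X, ℝ) → ℝ) : Prop :=
  (∀ c : ℝ, μ (ContinuousMap.const X c) = c) ∧
  (∀ (φ : C(X, ℝ)) (c : ℝ), μ (φ + ContinuousMap.const X c) = μ φ + c) ∧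
  (∀ φ ψ : C(X, ℝ), μ (φ ⊔ ψ) = max (μ φ) (μ ψ))

/-- `μ` is represented as `μ(φ) = max_i (λ i + φ (x i))` with `x` pairwise distinct
and `max_i λ i = 0`. -/
def IsRepr [TopologicalSpace X] (μ : C(X, ℝ) → ℝ) {n : ℕ}
    (x : Fin n → X) (lam : Fin n → ℝ) : Prop :=
  0 < n ∧ Function.Injective x ∧ (⨆ i, lam i) = 0 ∧
    ∀ φ : C(X, ℝ), μ φ = ⨆ i, (lam i + φ (x i))

/-- A finitely supported idempotent probability measure. -/
def IsFinSuppIPM [TopologicalSpace X] (μ : C(X, ℝ) → ℝ) : Prop :=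
  ∃ (n : ℕ) (x : Fin n → X) (lam : Fin n → ℝ), IsRepr μ x lam

/-- `ξ` is a coupling of `μ1` and `μ2`: an idempotent probability measure on `X × X`
whose marginals are `μ1` and `μ2`. -/
def IsCoupling [TopologicalSpace X] (μ1 μ2 : C(X, ℝ) → ℝ)
    (ξ : C(X × X, ℝ) → ℝ) : Prop :=
  IsIPM ξ ∧
  (∀ φ : C(X, ℝ), ξ (φ.comp ContinuousMap.fst) = μ1 φ) ∧
  (∀ φ : C(X, ℝ), ξ (φ.comp ContinuousMap.snd) = μ2 φ)

/-- A coupling matrix for weight vectors `lam1`, `lam2`: entries in `ℝ ∪ {−∞}`,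
with row maxima `lam1` and column maxima `lam2`. -/
def IsCouplingMatrix {n1 n2 : ℕ} (lam1 : Fin n1 → ℝ) (lam2 : Fin n2 → ℝ)
    (γ : Fin n1 → Fin n2 → WithBot ℝ) : Prop :=
  (∀ j, (Finset.univ.sup fun k => γ j k) = (lam1 j : WithBot ℝ)) ∧
  (∀ k, (Finset.univ.sup fun j => γ j k) = (lam2 k : WithBot ℝ))

/-- The cost `max{ |λ_{2k} − λ_{1j}| + ρ(x_{1j}, x_{2k}) : γ_{jk} ≠ −∞ }`. -/
noncomputable def matCost [MetricSpace X] {n1 n2 : ℕ}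
    (x1 : Fin n1 → X) (lam1 : Fin n1 → ℝ) (x2 : Fin n2 → X) (lam2 : Fin n2 → ℝ)
    (γ : Fin n1 → Fin n2 → WithBot ℝ) : ℝ :=
  sSup {c : ℝ | ∃ j k, γ j k ≠ ⊥ ∧ c = |lam2 k - lam1 j| + dist (x1 j) (x2 k)}

/-- `H(μ1, μ2)`: the infimum of costs over all coupling matrices
(for all representations of `μ1`, `μ2`; the representation is unique). -/
noncomputable def Hdist [MetricSpace X] (μ1 μ2 : C(X, ℝ) → ℝ) : ℝ :=
  sInf {c : ℝ | ∃ (n1 n2 : ℕ) (x1 : Fin n1 → X) (lam1 : Fin n1 → ℝ)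
      (x2 : Fin n2 → X) (lam2 : Fin n2 → ℝ) (γ : Fin n1 → Fin n2 → WithBot ℝ),
      IsRepr μ1 x1 lam1 ∧ IsRepr μ2 x2 lam2 ∧ IsCouplingMatrix lam1 lam2 γ ∧
      c = matCost x1 lam1 x2 lam2 γ}

/-- `ρ_ω(μ1, μ2) = min{diam X, H(μ1, μ2)}`. -/
noncomputable def rhoOmega [MetricSpace X] (μ1 μ2 : C(X, ℝ) → ℝ) : ℝ :=
  min (Metric.diam (Set.univ : Set X)) (Hdist μ1 μ2)

/- ---------- auxiliary lemmas ---------- -/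

lemma le_fin_sup {n : ℕ} (f : Fin n → ℝ) (i : Fin n) : f i ≤ ⨆ i, f i :=
  le_ciSup (Set.finite_range f).bddAbove i

lemma fin_sup_attained {n : ℕ} (hn : 0 < n) (f : Fin n → ℝ) :
    ∃ i₀, (⨆ i, f i) = f i₀ ∧ ∀ i, f i ≤ f i₀ := by
  have : Nonempty (Fin n) := ⟨⟨0, hn⟩⟩
  obtain ⟨i₀, hi₀⟩ := Finite.exists_max f
  exact ⟨i₀, le_antisymm (ciSup_le hi₀) (le_fin_sup f i₀), hi₀⟩

lemma costSet_bddAbove [MetricSpace X] {n1 n2 : ℕ}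
    (x1 : Fin n1 → X) (lam1 : Fin n1 → ℝ) (x2 : Fin n2 → X) (lam2 : Fin n2 → ℝ)
    (γ : Fin n1 → Fin n2 → WithBot ℝ) :
    BddAbove {c : ℝ | ∃ j k, γ j k ≠ ⊥ ∧ c = |lam2 k - lam1 j| + dist (x1 j) (x2 k)} := by
  have hsub : {c : ℝ | ∃ j k, γ j k ≠ ⊥ ∧ c = |lam2 k - lam1 j| + dist (x1 j) (x2 k)} ⊆
      Set.range (fun p : Fin n1 × Fin n2 => |lam2 p.2 - lam1 p.1| + dist (x1 p.1) (x2 p.2)) := by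
    rintro c ⟨j, k, -, rfl⟩; exact ⟨(j, k), rfl⟩
  exact ((Set.finite_range _).subset hsub).bddAbove

lemma matCost_nonneg [MetricSpace X] {n1 n2 : ℕ}
    (x1 : Fin n1 → X) (lam1 : Fin n1 → ℝ) (x2 : Fin n2 → X) (lam2 : Fin n2 → ℝ)
    (γ : Fin n1 → Fin n2 → WithBot ℝ) :
    0 ≤ matCost x1 lam1 x2 lam2 γ := by
  refine Real.sSup_nonneg ?_
  rintro c ⟨j, k, -, rfl⟩
  positivity

lemma matCost_symm [MetricSpace X] {n1 n2 : ℕ}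
    (x1 : Fin n1 → X) (lam1 : Fin n1 → ℝ) (x2 : Fin n2 → X) (lam2 : Fin n2 → ℝ)
    (γ : Fin n1 → Fin n2 → WithBot ℝ) :
    matCost x2 lam2 x1 lam1 (fun k j => γ j k) = matCost x1 lam1 x2 lam2 γ := by
  unfold matCost
  congr 1
  ext c
  constructor
  · rintro ⟨k, j, h, rfl⟩
    exact ⟨j, k, h, by rw [abs_sub_comm, dist_comm]⟩
  · rintro ⟨j, k, h, rfl⟩
    exact ⟨k, j, h, by rw [abs_sub_comm, dist_comm]⟩

/-- Key estimate: if there is a coupling matrix (column condition only) with small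
cost, then `μ2 φ` is almost below `μ1 φ`. -/
lemma key_est [MetricSpace X] {μ1 μ2 : C(X, ℝ) → ℝ} {n1 n2 : ℕ}
    {x1 : Fin n1 → X} {lam1 : Fin n1 → ℝ} {x2 : Fin n2 → X} {lam2 : Fin n2 → ℝ}
    {γ : Fin n1 → Fin n2 → WithBot ℝ}
    (h1 : IsRepr μ1 x1 lam1) (h2 : IsRepr μ2 x2 lam2)
    (hγcol : ∀ k, (Finset.univ.sup fun j => γ j k) = (lam2 k : WithBot ℝ))
    (φ : C(X, ℝ)) {ε δ : ℝ}
    (hc : matCost x1 lam1 x2 lam2 γ < ε)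
    (hmod : ∀ a b : X, dist a b < ε → |φ a - φ b| ≤ δ) :
    μ2 φ ≤ μ1 φ + (ε + δ) := by
  have hne1 : Nonempty (Fin n1) := ⟨⟨0, h1.1⟩⟩
  have hne2 : Nonempty (Fin n2) := ⟨⟨0, h2.1⟩⟩
  rw [h1.2.2.2 φ, h2.2.2.2 φ]
  refine ciSup_le fun k => ?_
  obtain ⟨j, -, hj⟩ := Finset.exists_mem_eq_sup Finset.univ Finset.univ_nonempty
    (fun j => γ j k)
  rw [hγcol k] at hj
  have hne : γ j k ≠ ⊥ := by rw [← hj]; exact WithBot.coe_ne_bot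
  have hle : |lam2 k - lam1 j| + dist (x1 j) (x2 k) ≤ matCost x1 lam1 x2 lam2 γ :=
    le_csSup (costSet_bddAbove x1 lam1 x2 lam2 γ) ⟨j, k, hne, rfl⟩
  have h3 : |lam2 k - lam1 j| + dist (x1 j) (x2 k) < ε := lt_of_le_of_lt hle hc
  have habs : 0 ≤ |lam2 k - lam1 j| := abs_nonneg _
  have hdn : (0 : ℝ) ≤ dist (x1 j) (x2 k) := dist_nonneg
  have hd : dist (x1 j) (x2 k) < ε := by linarith
  have hl : lam2 k - lam1 j < ε := lt_of_le_of_lt (le_abs_self _) (by linarith)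
  have hφ : φ (x2 k) - φ (x1 j) ≤ δ := by
    have := hmod (x2 k) (x1 j) (by rwa [dist_comm])
    have h' := le_abs_self (φ (x2 k) - φ (x1 j))
    linarith [abs_sub_comm (φ (x2 k)) (φ (x1 j)) ▸ this]
  have hsup := le_fin_sup (fun i => lam1 i + φ (x1 i)) j
  linarith

/-- A coupling matrix always exists. -/
lemma exists_couplingMatrix {n1 n2 : ℕ} {lam1 : Fin n1 → ℝ} {lam2 : Fin n2 → ℝ}
    (hn1 : 0 < n1) (hn2 : 0 < n2)
    (h1 : (⨆ j, lam1 j) = 0) (h2 : (⨆ k, lam2 k) = 0) :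
    ∃ γ : Fin n1 → Fin n2 → WithBot ℝ, IsCouplingMatrix lam1 lam2 γ := by
  obtain ⟨j₀, hj₀eq, hj₀⟩ := fin_sup_attained hn1 lam1
  obtain ⟨k₀, hk₀eq, hk₀⟩ := fin_sup_attained hn2 lam2
  rw [h1] at hj₀eq; rw [h2] at hk₀eq
  refine ⟨fun j k => ((lam1 j + lam2 k : ℝ) : WithBot ℝ), ?_, ?_⟩
  · intro j
    refine le_antisymm (Finset.sup_le fun k _ => ?_) ?_
    · exact WithBot.coe_le_coe.mpr (by have := hk₀ k; linarith [hk₀eq.symm ▸ hk₀ k])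
    · have := Finset.le_sup (f := fun k => ((lam1 j + lam2 k : ℝ) : WithBot ℝ))
        (Finset.mem_univ k₀)
      simpa [← hk₀eq] using this
  · intro k
    refine le_antisymm (Finset.sup_le fun j _ => ?_) ?_
    · exact WithBot.coe_le_coe.mpr (by linarith [hj₀eq.symm ▸ hj₀ j])
    · have := Finset.le_sup (f := fun j => ((lam1 j + lam2 k : ℝ) : WithBot ℝ))
        (Finset.mem_univ j₀)
      simpa [← hj₀eq] using this

/-- for finitely supported idempotent probability measures,
`H(μ₁, μ₂) = 0` iff `μ₁ = μ₂`. -/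
theorem stmt6 [MetricSpace X] [CompactSpace X]
    (μ1 μ2 : C(X, ℝ) → ℝ) (h1 : IsFinSuppIPM μ1) (h2 : IsFinSuppIPM μ2) :
    Hdist μ1 μ2 = 0 ↔ μ1 = μ2 := by
  set S := {c : ℝ | ∃ (n1 n2 : ℕ) (x1 : Fin n1 → X) (lam1 : Fin n1 → ℝ)
      (x2 : Fin n2 → X) (lam2 : Fin n2 → ℝ) (γ : Fin n1 → Fin n2 → WithBot ℝ),
      IsRepr μ1 x1 lam1 ∧ IsRepr μ2 x2 lam2 ∧ IsCouplingMatrix lam1 lam2 γ ∧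
      c = matCost x1 lam1 x2 lam2 γ} with hS
  have hSnonneg : ∀ c ∈ S, (0 : ℝ) ≤ c := by
    rintro c ⟨n1, n2, x1, lam1, x2, lam2, γ, -, -, -, rfl⟩
    exact matCost_nonneg x1 lam1 x2 lam2 γ
  obtain ⟨n1, x1, lam1, hr1⟩ := h1
  obtain ⟨n2, x2, lam2, hr2⟩ := h2
  obtain ⟨γ₀, hγ₀⟩ := exists_couplingMatrix hr1.1 hr2.1 hr1.2.2.1 hr2.2.2.1
  have hSne : S.Nonempty :=
    ⟨_, n1, n2, x1, lam1, x2, lam2, γ₀, hr1, hr2, hγ₀, rfl⟩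
  constructor
  · intro h0
    funext φ
    have huc : UniformContinuous φ :=
      CompactSpace.uniformContinuous_of_continuous φ.continuous
    have H : ∀ ε' > (0 : ℝ), μ2 φ ≤ μ1 φ + ε' ∧ μ1 φ ≤ μ2 φ + ε' := by
      intro ε' hε'
      obtain ⟨δ₀, hδ₀, hmod₀⟩ := Metric.uniformContinuous_iff.mp huc (ε' / 2)
        (by positivity)
      set ε := min δ₀ (ε' / 2) with hεdef
      have hεpos : 0 < ε := lt_min hδ₀ (by positivity)
      -- there exists an element of S smaller than ε
      have hlt : ∃ c ∈ S, c < ε := by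
        by_contra hcon
        push_neg at hcon
        have h' : ε ≤ Hdist μ1 μ2 := le_csInf hSne hcon
        rw [h0] at h'
        linarith
      obtain ⟨c, hcS, hclt⟩ := hlt
      obtain ⟨m1, m2, y1, mu1, y2, mu2, γ, hrA, hrB, hγ, rfl⟩ := hcS
      have hmod : ∀ a b : X, dist a b < ε → |φ a - φ b| ≤ ε' / 2 := by
        intro a b hab
        have := hmod₀ (lt_of_lt_of_le hab (min_le_left _ _))
        rw [Real.dist_eq] at this
        linarith
      have h21 : μ2 φ ≤ μ1 φ + (ε + ε' / 2) :=
        key_est hrA hrB hγ.2 φ hclt hmod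
      have h12 : μ1 φ ≤ μ2 φ + (ε + ε' / 2) := by
        refine key_est hrB hrA hγ.1 φ ?_ hmod
        rwa [matCost_symm]
      have hεle : ε ≤ ε' / 2 := min_le_right _ _
      constructor <;> linarith
    exact le_antisymm
      (le_of_forall_pos_le_add fun ε' hε' => (H ε' hε').2)
      (le_of_forall_pos_le_add fun ε' hε' => (H ε' hε').1)
  · intro h
    subst h
    refine le_antisymm ?_ (Real.sInf_nonneg hSnonneg)
    -- diagonal coupling matrix gives cost 0
    set γd : Fin n1 → Fin n1 → WithBot ℝ :=
      fun j k => if j = k then (lam1 j : WithBot ℝ) else ⊥ with hγd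
    have hγdCM : IsCouplingMatrix lam1 lam1 γd := by
      constructor
      · intro j
        refine le_antisymm (Finset.sup_le fun k _ => ?_) ?_
        · by_cases hjk : j = k <;> simp [hγd, hjk]
        · have := Finset.le_sup (f := fun k => γd j k) (Finset.mem_univ j)
          simpa [hγd] using this
      · intro k
        refine le_antisymm (Finset.sup_le fun j _ => ?_) ?_
        · by_cases hjk : j = k
          · subst hjk; simp [hγd]
          · simp [hγd, hjk]
        · have := Finset.le_sup (f := fun j => γd j k) (Finset.mem_univ k)
          simpa [hγd] using this
    have hcost : matCost x1 lam1 x1 lam1 γd = 0 := by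
      have hset : {c : ℝ | ∃ j k, γd j k ≠ ⊥ ∧
          c = |lam1 k - lam1 j| + dist (x1 j) (x1 k)} = {0} := by
        ext c
        simp only [Set.mem_setOf_eq, Set.mem_singleton_iff]
        constructor
        · rintro ⟨j, k, hne, rfl⟩
          by_cases hjk : j = k
          · subst hjk; simp
          · simp [hγd, hjk] at hne
        · rintro rfl
          exact ⟨⟨0, hr1.1⟩, ⟨0, hr1.1⟩, by simp [hγd], by simp⟩
      unfold matCost
      rw [hset, csSup_singleton]
    have h0S : (0 : ℝ) ∈ S :=
      ⟨n1, n1, x1, lam1, x1, lam1, γd, hr1, hr1, hγdCM, hcost.symm⟩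
    have hbdd : BddBelow S := ⟨0, fun c hc => hSnonneg c hc⟩
    exact csInf_le hbdd h0S
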